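/- arXiv:1410.6950 — 3 statements merged into one kernel-verified Lean document; each statement's English description precedes it below -/
import Mathlib

section
/- Let φ : M_n(ℂ) → A be a linear map into a C*-algebra A. Then φ is completely positive if and only if the Choi matrix (φ(Eᵢⱼ))ᵢⱼ ∈ M_n(A) is positive. -/
set_option linter.unusedSectionVars false
set_option maxHeartbeats 1000000
set_option synthInstance.maxHeartbeats 400000

open scoped ComplexOrder Matrix

section KeyLemma

/-- In a unital C⋆-algebra, a finite sum of elements of the form `star x * x` is again
of this form (take the square root provided by the continuous functional calculus). -/
lemma choiAux_exists_star_mul_self {B : Type*} [NormedRing B] [StarRing B] [CStarRing B]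
    [NormedAlgebra ℂ B] [StarModule ℂ B] [CompleteSpace B]
    {ι : Type*} [Fintype ι] (f : ι → B) :
    ∃ y : B, ∑ r, star (f r) * f r = star y * y := by
  letI : CStarAlgebra B := {}
  letI := CStarAlgebra.spectralOrder B
  haveI := CStarAlgebra.spectralOrderedRing B
  have hb : (0 : B) ≤ ∑ r, star (f r) * f r :=
    Finset.sum_nonneg fun r _ => star_mul_self_nonneg (f r)
  obtain ⟨h1, h2⟩ := hb
  rw [sub_zero] at h1 h2
  obtain ⟨x, hx, -, hxx⟩ := CFC.exists_sqrt_of_isSelfAdjoint_of_quasispectrumRestricts h1 h2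
  exact ⟨x, by rw [← hxx, hx.star_eq]⟩

end KeyLemma

section CMat

/-- Type synonym for square matrices over a C⋆-algebra, on which we will install
the operator norm coming from its action on the Hilbert C⋆-module `Fin k → A`. -/
def CMat (k : ℕ) (A : Type*) : Type _ := Matrix (Fin k) (Fin k) A

variable {k : ℕ} {A : Type*} [NormedRing A] [StarRing A] [CStarRing A]
  [NormedAlgebra ℂ A] [StarModule ℂ A] [CompleteSpace A]

instance : Ring (CMat k A) := inferInstanceAs (Ring (Matrix (Fin k) (Fin k) A))
instance : StarRing (CMat k A) := inferInstanceAs (StarRing (Matrix (Fin k) (Fin k) A))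
instance : Algebra ℂ (CMat k A) := inferInstanceAs (Algebra ℂ (Matrix (Fin k) (Fin k) A))
instance : StarModule ℂ (CMat k A) :=
  inferInstanceAs (StarModule ℂ (Matrix (Fin k) (Fin k) A))

/-- Identity equivalence between matrices and the synonym. -/
def CMat.of : Matrix (Fin k) (Fin k) A ≃ CMat k A := Equiv.refl _

noncomputable local instance : CStarAlgebra A := {}
noncomputable local instance : PartialOrder A := CStarAlgebra.spectralOrder A
local instance : StarOrderedRing A := CStarAlgebra.spectralOrderedRing A

open WithCStarModule CStarModule


/-- A matrix acting on the Hilbert C⋆-module `Fin k → A`, as a linear map. -/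
noncomputable def CMat.mulLin (T : CMat k A) : WithCStarModule A (Fin k → A) →ₗ[ℂ] WithCStarModule A (Fin k → A) where
  toFun x := (WithCStarModule.equiv A _).symm fun i => ∑ j, CMat.of.symm T i j * x j
  map_add' x y := by
    apply WithCStarModule.ext
    intro i
    simp [mul_add, Finset.sum_add_distrib]
  map_smul' c x := by
    apply WithCStarModule.ext
    intro i
    simp [Finset.smul_sum, mul_smul_comm]

lemma CMat.mulLin_apply (T : CMat k A) (x : WithCStarModule A (Fin k → A)) (i : Fin k) :
    (CMat.mulLin T x) i = ∑ j, CMat.of.symm T i j * x j := rfl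

lemma CMat.norm_mulLin_le (T : CMat k A) (x : WithCStarModule A (Fin k → A)) :
    ‖CMat.mulLin T x‖ ≤ (∑ i, ∑ j, ‖CMat.of.symm T i j‖) * ‖x‖ := by
  calc ‖CMat.mulLin T x‖ ≤ ∑ i, ‖(CMat.mulLin T x) i‖ :=
        WithCStarModule.pi_norm_le_sum_norm _
    _ ≤ ∑ i, ∑ j, ‖CMat.of.symm T i j‖ * ‖x‖ := by
        refine Finset.sum_le_sum fun i _ => ?_
        rw [CMat.mulLin_apply]
        refine (norm_sum_le _ _).trans (Finset.sum_le_sum fun j _ => ?_)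
        exact (norm_mul_le _ _).trans <| by
          gcongr
          exact WithCStarModule.norm_apply_le_norm x j
    _ = (∑ i, ∑ j, ‖CMat.of.symm T i j‖) * ‖x‖ := by
        simp [Finset.sum_mul]

/-- A matrix acting on the Hilbert C⋆-module `Fin k → A`, as a continuous linear map. -/
noncomputable def CMat.toCLM (T : CMat k A) : WithCStarModule A (Fin k → A) →L[ℂ] WithCStarModule A (Fin k → A) :=
  LinearMap.mkContinuous (CMat.mulLin T) (∑ i, ∑ j, ‖CMat.of.symm T i j‖)
    (CMat.norm_mulLin_le T)

lemma CMat.toCLM_apply (T : CMat k A) (x : WithCStarModule A (Fin k → A)) (i : Fin k) :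
    (CMat.toCLM T x) i = ∑ j, CMat.of.symm T i j * x j := rfl

/-- The canonical basis vector in the module `Fin k → A`. -/
noncomputable def CMat.single (j : Fin k) : WithCStarModule A (Fin k → A) :=
  (WithCStarModule.equiv A _).symm (Pi.single j (1 : A))

lemma CMat.toCLM_single (T : CMat k A) (j i : Fin k) :
    (CMat.toCLM T (CMat.single j)) i = CMat.of.symm T i j := by
  rw [CMat.toCLM_apply]
  rw [Finset.sum_eq_single j]
  · simp [CMat.single]
  · intro b _ hb
    simp [CMat.single, Pi.single_apply, hb]
  · simp

lemma CMat.ofSymm_mul (T S : CMat k A) :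
    CMat.of.symm (T * S) = CMat.of.symm T * CMat.of.symm S := rfl

lemma CMat.ofSymm_add (T S : CMat k A) :
    CMat.of.symm (T + S) = CMat.of.symm T + CMat.of.symm S := rfl

lemma CMat.ofSymm_star (T : CMat k A) :
    CMat.of.symm (star T) = (CMat.of.symm T)ᴴ := rfl

lemma CMat.ofSymm_sub (T S : CMat k A) :
    CMat.of.symm (T - S) = CMat.of.symm T - CMat.of.symm S := rfl

/-- The action of matrices on the module, as an algebra homomorphism. -/
noncomputable def CMat.toCLMHom : CMat k A →ₐ[ℂ] (WithCStarModule A (Fin k → A) →L[ℂ] WithCStarModule A (Fin k → A)) where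
  toFun := CMat.toCLM
  map_one' := by
    ext x : 1
    apply WithCStarModule.ext
    intro i
    rw [CMat.toCLM_apply]
    simp [Matrix.one_apply, Finset.sum_ite_eq, show (CMat.of.symm (1 : CMat k A)) = 1 from rfl]
    exact (Finset.sum_ite_eq Finset.univ i (fun j => x j)).trans (if_pos (Finset.mem_univ i))
  map_mul' T S := by
    ext x : 1
    apply WithCStarModule.ext
    intro i
    show ∑ j, CMat.of.symm (T * S) i j * x j = ∑ j, CMat.of.symm T i j * (CMat.toCLM S x) j
    have : ∀ j, CMat.of.symm (T * S) i j = ∑ l, CMat.of.symm T i l * CMat.of.symm S l j := by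
      rw [CMat.ofSymm_mul]
      intro j
      exact Matrix.mul_apply
    simp only [this, CMat.toCLM_apply, Finset.sum_mul, Finset.mul_sum, mul_assoc]
    exact Finset.sum_comm
  map_zero' := by
    ext x : 1
    apply WithCStarModule.ext
    intro i
    rw [CMat.toCLM_apply]
    simp [show ∀ a b, CMat.of.symm (0 : CMat k A) a b = 0 from fun _ _ => rfl]
  map_add' T S := by
    ext x : 1
    apply WithCStarModule.ext
    intro i
    show (CMat.toCLM (T + S) x) i
        = ((CMat.toCLM T x) + (CMat.toCLM S x) : WithCStarModule A (Fin k → A)) i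
    rw [WithCStarModule.add_apply]
    simp only [CMat.toCLM_apply]
    rw [← Finset.sum_add_distrib]
    refine Finset.sum_congr rfl fun j _ => ?_
    rw [show CMat.of.symm (T + S) i j = CMat.of.symm T i j + CMat.of.symm S i j from rfl,
      add_mul]
  commutes' c := by
    ext x : 1
    apply WithCStarModule.ext
    intro i
    rw [CMat.toCLM_apply]
    show ∑ j, (Matrix.diagonal (fun _ => algebraMap ℂ A c)) i j * x j = _
    rw [Finset.sum_eq_single i]
    · simp [Algebra.algebraMap_eq_smul_one, WithCStarModule.smul_apply]
    · intro b _ hb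
      simp [Matrix.diagonal_apply_ne _ (Ne.symm hb)]
    · simp

lemma CMat.toCLMHom_injective : Function.Injective (CMat.toCLMHom (k := k) (A := A)) := by
  intro T S h
  have : ∀ i j, CMat.of.symm T i j = CMat.of.symm S i j := by
    intro i j
    rw [← CMat.toCLM_single T j i, ← CMat.toCLM_single S j i]
    show (CMat.toCLMHom T (CMat.single j)) i = (CMat.toCLMHom S (CMat.single j)) i
    rw [h]
  exact CMat.of.symm.injective (Matrix.ext this)

noncomputable local instance : NormedRing (CMat k A) :=
  NormedRing.induced _ _ (CMat.toCLMHom (k := k) (A := A)).toRingHom CMat.toCLMHom_injective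

noncomputable local instance : NormedAlgebra ℂ (CMat k A) :=
  NormedAlgebra.induced ℂ _ _ (CMat.toCLMHom (k := k) (A := A))

lemma CMat.norm_def (T : CMat k A) : ‖T‖ = ‖CMat.toCLM T‖ := rfl

lemma CMat.norm_entry_le (T : CMat k A) (i j : Fin k) :
    ‖CMat.of.symm T i j‖ ≤ ‖(1 : A)‖ * ‖T‖ := by
  rw [← CMat.toCLM_single T j i]
  calc ‖(CMat.toCLM T (CMat.single j)) i‖ ≤ ‖CMat.toCLM T (CMat.single j)‖ :=
        WithCStarModule.norm_apply_le_norm _ i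
    _ ≤ ‖CMat.toCLM T‖ * ‖CMat.single j‖ := (CMat.toCLM T).le_opNorm _
    _ = ‖(1 : A)‖ * ‖T‖ := by
        rw [CMat.single, WithCStarModule.norm_single, CMat.norm_def, mul_comm]

lemma CMat.norm_le_sum (T : CMat k A) :
    ‖T‖ ≤ ∑ i, ∑ j, ‖CMat.of.symm T i j‖ := by
  rw [CMat.norm_def]
  exact LinearMap.mkContinuous_norm_le _ (by positivity) _

/-- Matrix entry extraction as an additive monoid hom. -/
def CMat.entry (i j : Fin k) : CMat k A →+ A where
  toFun T := CMat.of.symm T i j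
  map_zero' := rfl
  map_add' _ _ := rfl

local instance : CompleteSpace (CMat k A) := by
  apply Metric.complete_of_cauchySeq_tendsto
  intro u hu
  have hent : ∀ i j : Fin k,
      ∃ L : A, Filter.Tendsto (fun m => CMat.of.symm (u m) i j) Filter.atTop (nhds L) := by
    intro i j
    apply cauchySeq_tendsto_of_complete
    have hlip := AddMonoidHomClass.lipschitz_of_bound
      (CMat.entry (k := k) (A := A) i j) ‖(1 : A)‖
      (fun T => by exact CMat.norm_entry_le T i j)
    exact (hlip.uniformContinuous.comp_cauchySeq hu)
  choose L hL using hent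
  refine ⟨CMat.of (Matrix.of L), ?_⟩
  rw [tendsto_iff_norm_sub_tendsto_zero]
  apply squeeze_zero (fun m => norm_nonneg _)
    (g := fun m => ∑ i, ∑ j, ‖CMat.of.symm (u m) i j - L i j‖)
  · intro m
    calc ‖u m - CMat.of (Matrix.of L)‖
        ≤ ∑ i, ∑ j, ‖CMat.of.symm (u m - CMat.of (Matrix.of L)) i j‖ := CMat.norm_le_sum _
      _ = ∑ i, ∑ j, ‖CMat.of.symm (u m) i j - L i j‖ := by
          refine Finset.sum_congr rfl fun i _ => Finset.sum_congr rfl fun j _ => ?_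
          rw [CMat.ofSymm_sub, Matrix.sub_apply, Equiv.symm_apply_apply]
          rfl
  · have : ∀ i j : Fin k, Filter.Tendsto (fun m => ‖CMat.of.symm (u m) i j - L i j‖)
        Filter.atTop (nhds 0) := fun i j => tendsto_iff_norm_sub_tendsto_zero.mp (hL i j)
    have h := tendsto_finset_sum (Finset.univ : Finset (Fin k))
      (fun i _ => tendsto_finset_sum (Finset.univ : Finset (Fin k)) (fun j _ => this i j))
    simpa using h

lemma exists_conjTranspose_mul_self {ι : Type*} [Fintype ι]
    (f : ι → Matrix (Fin k) (Fin k) A) :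
    ∃ Y : Matrix (Fin k) (Fin k) A, ∑ r, (f r)ᴴ * f r = Yᴴ * Y := by
  obtain ⟨y, hy⟩ := choiAux_exists_star_mul_self (B := CStarMatrix (Fin k) (Fin k) A)
    (fun r => CStarMatrix.ofMatrix (f r))
  exact ⟨CStarMatrix.ofMatrix.symm y, hy⟩

end CMat

/-- **Choi's theorem.** A linear map `φ : M_n(ℂ) → A` into a C*-algebra
`A` is completely positive iff its Choi matrix `(φ(Eᵢⱼ))ᵢⱼ ∈ M_n(A)` is positive.
Positivity in `M_k(A)` is expressed by the C*-characterization `M = Yᴴ * Y`; positivity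
in `M_k(M_n(ℂ))` by positive semidefiniteness of the flattened matrix. -/
theorem choi_theorem
    {n : ℕ} {A : Type*} [NormedRing A] [StarRing A] [CStarRing A]
    [NormedAlgebra ℂ A] [StarModule ℂ A] [CompleteSpace A]
    (φ : Matrix (Fin n) (Fin n) ℂ →ₗ[ℂ] A) :
    (∀ (k : ℕ) (X : Matrix (Fin k) (Fin k) (Matrix (Fin n) (Fin n) ℂ)),
        (Matrix.of fun (p q : Fin k × Fin n) => X p.1 q.1 p.2 q.2).PosSemidef →
        ∃ Y : Matrix (Fin k) (Fin k) A, X.map φ = Yᴴ * Y) ↔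
      ∃ Y : Matrix (Fin n) (Fin n) A,
        (Matrix.of fun i j => φ (Matrix.single i j 1)) = Yᴴ * Y := by
  constructor
  · -- completely positive ⟹ Choi matrix positive
    intro h
    set B : Matrix (Fin 1) (Fin n × Fin n) ℂ :=
      Matrix.of fun _ p => if p.1 = p.2 then (1 : ℂ) else 0 with hB
    have hpsd : (Matrix.of fun (p q : Fin n × Fin n) =>
        (Matrix.of fun i j => Matrix.single i j (1 : ℂ)) p.1 q.1 p.2 q.2).PosSemidef := by
      have hmat : (Matrix.of fun (p q : Fin n × Fin n) =>
          (Matrix.of fun i j => Matrix.single i j (1 : ℂ)) p.1 q.1 p.2 q.2)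
          = Bᴴ * B := by
        ext p q
        rw [Matrix.mul_apply]
        rw [Fin.sum_univ_one]
        simp only [Matrix.conjTranspose_apply, hB, Matrix.of_apply, Matrix.single]
        split_ifs with h1 h2 h3 h4 h5 <;>
          simp_all [Prod.ext_iff] <;> tauto
      rw [hmat]
      exact Matrix.posSemidef_conjTranspose_mul_self B
    obtain ⟨Y, hY⟩ := h n (Matrix.of fun i j => Matrix.single i j 1) hpsd
    refine ⟨Y, ?_⟩
    rw [← hY]
    ext i j
    simp [Matrix.map_apply]
  · -- Choi matrix positive ⟹ completely positive
    rintro ⟨W, hW⟩ k X hX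
    have hφE : ∀ i j, φ (Matrix.single i j 1) = ∑ l, star (W l i) * W l j := by
      intro i j
      have := congrFun (congrFun hW i) j
      simpa [Matrix.mul_apply, Matrix.conjTranspose_apply] using this
    have hφ : ∀ M : Matrix (Fin n) (Fin n) ℂ,
        φ M = ∑ i, ∑ j, M i j • ∑ l, star (W l i) * W l j := by
      intro M
      conv_lhs => rw [Matrix.matrix_eq_sum_single M]
      rw [map_sum]
      refine Finset.sum_congr rfl fun i _ => ?_
      rw [map_sum]
      refine Finset.sum_congr rfl fun j _ => ?_
      have hstd : Matrix.single i j (M i j) = M i j • Matrix.single i j 1 := by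
        rw [Matrix.smul_single, smul_eq_mul, mul_one]
      rw [hstd, map_smul, hφE]
    obtain ⟨S, hS⟩ : ∃ S : Matrix (Fin k × Fin n) (Fin k × Fin n) ℂ,
        (Matrix.of fun (p q : Fin k × Fin n) => X p.1 q.1 p.2 q.2) = Sᴴ * S := by
      open scoped MatrixOrder in exact CStarAlgebra.nonneg_iff_eq_star_mul_self.mp hX.nonneg
    have hSe : ∀ (s t : Fin k) (i j : Fin n),
        X s t i j = ∑ p, star (S p (s, i)) * S p (t, j) := by
      intro s t i j
      have := congrFun (congrFun hS (s, i)) (t, j)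
      simpa [Matrix.mul_apply, Matrix.conjTranspose_apply] using this
    by_cases hk : k = 0
    · subst hk
      exact ⟨0, by ext i j; exact i.elim0⟩
    · set i₀ : Fin k := ⟨0, Nat.pos_of_ne_zero hk⟩ with hi₀
      set Z : (Fin k × Fin n) × Fin n → Fin k → A :=
        fun r t => ∑ j, S r.1 (t, j) • W r.2 j with hZ
      set f : ((Fin k × Fin n) × Fin n) → Matrix (Fin k) (Fin k) A :=
        fun r => Matrix.of fun u t => if u = i₀ then Z r t else 0 with hf
      have key : X.map φ = ∑ r, (f r)ᴴ * f r := by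
        ext s t
        rw [Matrix.map_apply, Matrix.sum_apply]
        have h1 : ∀ r, ((f r)ᴴ * f r) s t = star (Z r s) * Z r t := by
          intro r
          rw [Matrix.mul_apply]
          rw [Finset.sum_eq_single i₀]
          · simp [hf, Matrix.conjTranspose_apply]
          · intro u _ hu
            simp [hf, Matrix.conjTranspose_apply, hu]
          · simp
        simp only [h1]
        -- the common four-fold sum
        set F : (Fin n × Fin n) → ((Fin k × Fin n) × Fin n) → A := fun q r =>
          (star (S r.1 (s, q.1)) * S r.1 (t, q.2)) • (star (W r.2 q.1) * W r.2 q.2) with hF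
        have hLHS : φ (X s t) = ∑ q : Fin n × Fin n, ∑ r : (Fin k × Fin n) × Fin n, F q r := by
          rw [hφ (X s t)]
          conv_rhs => rw [Fintype.sum_prod_type]
          refine Finset.sum_congr rfl fun i _ => Finset.sum_congr rfl fun j _ => ?_
          rw [hSe s t i j, Finset.sum_smul]
          conv_rhs => rw [Fintype.sum_prod_type]
          refine Finset.sum_congr rfl fun p _ => ?_
          rw [Finset.smul_sum]
        have hRHS : ∀ r : (Fin k × Fin n) × Fin n,
            star (Z r s) * Z r t = ∑ q : Fin n × Fin n, F q r := by
          intro r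
          simp only [hZ]
          rw [star_sum, Finset.sum_mul_sum]
          conv_rhs => rw [Fintype.sum_prod_type]
          refine Finset.sum_congr rfl fun i _ => Finset.sum_congr rfl fun j _ => ?_
          rw [star_smul, smul_mul_smul_comm]
        rw [hLHS]
        rw [Finset.sum_comm]
        exact Finset.sum_congr rfl fun r _ => (hRHS r).symm
      obtain ⟨Y, hY⟩ := exists_conjTranspose_mul_self f
      exact ⟨Y, key.trans hY⟩
end

section
/- Let A₀, A₁, …, Aₙ, B ∈ M_p(ℂ) and suppose the block matrix in M_{n+1}(M_p(ℂ)) with (0,0) block A₀ + B, (i,i) block A₀ − B for 1 ≤ i ≤ n, (0,i) block 2Aᵢ*, and (i,0) block 2Aᵢ is positive semidefinite. Let S₁,…,Sₙ be Cuntz isometries on H. Then A₀ ⊗ I + Σᵢ₌₁ⁿ Aᵢ ⊗ Sᵢ + Σᵢ₌₁ⁿ Aᵢ* ⊗ Sᵢ* is positive in M_p(B(H)). -/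
open scoped ComplexOrder Matrix

lemma psd_inner_nonneg {H : Type*} [NormedAddCommGroup H] [InnerProductSpace ℂ H]
    {ι : Type*} [Fintype ι] [DecidableEq ι]
    (M : Matrix ι ι ℂ) (hM : M.PosSemidef) (u : ι → H) :
    0 ≤ ∑ x, ∑ y, M x y * (inner ℂ (u x) (u y) : ℂ) := by
  obtain ⟨N, rfl⟩ : ∃ N : Matrix ι ι ℂ, M = Nᴴ * N := by
    open scoped MatrixOrder Matrix.Norms.L2Operator in
    exact CStarAlgebra.nonneg_iff_eq_star_mul_self.mp hM.nonneg
  have h1 : ∀ k, (inner ℂ (∑ x, N k x • u x) (∑ x, N k x • u x) : ℂ)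
      = ∑ x, ∑ y, (starRingEnd ℂ) (N k x) * N k y * (inner ℂ (u x) (u y) : ℂ) := by
    intro k
    rw [sum_inner]
    refine Finset.sum_congr rfl fun x _ => ?_
    rw [inner_smul_left, inner_sum, Finset.mul_sum]
    refine Finset.sum_congr rfl fun y _ => ?_
    rw [inner_smul_right]; ring
  have key : ∑ x, ∑ y, (Nᴴ * N) x y * (inner ℂ (u x) (u y) : ℂ)
      = ∑ k, (inner ℂ (∑ x, N k x • u x) (∑ x, N k x • u x) : ℂ) := by
    calc ∑ x, ∑ y, (Nᴴ * N) x y * (inner ℂ (u x) (u y) : ℂ)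
        = ∑ x, ∑ y, ∑ k, (starRingEnd ℂ) (N k x) * N k y * (inner ℂ (u x) (u y) : ℂ) := by
          refine Finset.sum_congr rfl fun x _ => Finset.sum_congr rfl fun y _ => ?_
          rw [Matrix.mul_apply, Finset.sum_mul]
          exact Finset.sum_congr rfl fun k _ => by rw [Matrix.conjTranspose_apply, starRingEnd_apply]
      _ = ∑ x, ∑ k, ∑ y, (starRingEnd ℂ) (N k x) * N k y * (inner ℂ (u x) (u y) : ℂ) :=
          Finset.sum_congr rfl fun x _ => Finset.sum_comm
      _ = ∑ k, ∑ x, ∑ y, (starRingEnd ℂ) (N k x) * N k y * (inner ℂ (u x) (u y) : ℂ) :=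
          Finset.sum_comm
      _ = ∑ k, (inner ℂ (∑ x, N k x • u x) (∑ x, N k x • u x) : ℂ) :=
          Finset.sum_congr rfl fun k _ => (h1 k).symm
  rw [key]
  refine Finset.sum_nonneg fun k _ => ?_
  rw [inner_self_eq_norm_sq_to_K, ← RCLike.ofReal_pow]
  exact RCLike.ofReal_nonneg.mpr (sq_nonneg _)

/-- Let `A₀, A₁, …, Aₙ, B ∈ M_p(ℂ)` and suppose the block matrix in
`M_{n+1}(M_p(ℂ))` with `(0,0)` block `A₀ + B`, `(i,i)` block `A₀ − B`, `(0,i)` block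
`2Aᵢ*`, `(i,0)` block `2Aᵢ` is positive semidefinite. Then for Cuntz isometries
`S₁,…,Sₙ` on `H`, the element `A₀ ⊗ I + Σᵢ Aᵢ ⊗ Sᵢ + Σᵢ Aᵢ* ⊗ Sᵢ*` is positive in
`M_p(B(H))` (positivity via the quadratic form in the complex order). -/
theorem block_positivity_implies_positive_in_MpSn
    {H : Type*} [NormedAddCommGroup H] [InnerProductSpace ℂ H] [CompleteSpace H]
    {n p : ℕ} (A0 B : Matrix (Fin p) (Fin p) ℂ) (A : Fin n → Matrix (Fin p) (Fin p) ℂ)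
    (hblock : (Matrix.of fun (x y : Fin (n+1) × Fin p) =>
      (if x.1 = 0 then
        (if y.1 = 0 then A0 + B else (2 : ℂ) • ((Fin.cons 0 A : Fin (n+1) → _) y.1)ᴴ)
       else if y.1 = 0 then (2 : ℂ) • (Fin.cons 0 A : Fin (n+1) → _) x.1
       else if x.1 = y.1 then A0 - B
       else 0) x.2 y.2).PosSemidef)
    (S : Fin n → H →L[ℂ] H)
    (hiso : ∀ i, (ContinuousLinearMap.adjoint (S i)) ∘L S i = 1)
    (hsum : ∑ i, S i ∘L ContinuousLinearMap.adjoint (S i) = 1) :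
    ∀ v : Fin p → H,
      0 ≤ ∑ a, ∑ b,
        (inner ℂ
          ((A0 a b • (1 : H →L[ℂ] H)
            + ∑ i, A i a b • S i
            + ∑ i, (starRingEnd ℂ) (A i b a) • ContinuousLinearMap.adjoint (S i))
          (v b)) (v a) : ℂ) := by
  intro v
  set u : Fin (n+1) × Fin p → H :=
    fun x => (Fin.cons v (fun i b => ContinuousLinearMap.adjoint (S i) (v b)) : Fin (n+1) → Fin p → H) x.1 x.2 with hu
  have hQ := psd_inner_nonneg _ hblock u
  -- canonical middle expression
  set C : ℂ := ∑ a, ∑ b, ( (A0 a b + B a b) * (inner ℂ (v a) (v b) : ℂ)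
      + (∑ i, 2 * (starRingEnd ℂ) (A i b a) * (inner ℂ (v a) (ContinuousLinearMap.adjoint (S i) (v b)) : ℂ))
      + (∑ i, 2 * A i a b * (inner ℂ (v a) (S i (v b)) : ℂ))
      + (A0 a b - B a b) * (inner ℂ (v a) (v b) : ℂ)) with hC
  have hQC : (∑ x, ∑ y, (Matrix.of fun (x y : Fin (n+1) × Fin p) =>
      (if x.1 = 0 then
        (if y.1 = 0 then A0 + B else (2 : ℂ) • ((Fin.cons 0 A : Fin (n+1) → _) y.1)ᴴ)
       else if y.1 = 0 then (2 : ℂ) • (Fin.cons 0 A : Fin (n+1) → _) x.1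
       else if x.1 = y.1 then A0 - B
       else 0) x.2 y.2) x y * (inner ℂ (u x) (u y) : ℂ)) = C := by
    have hsum' : ∀ x y : H, (∑ i, (inner ℂ x ((S i) ((ContinuousLinearMap.adjoint (S i)) y)) : ℂ)) = inner ℂ x y := by
      intro x y
      rw [← inner_sum]
      congr 1
      have := congrArg (fun T : H →L[ℂ] H => T y) hsum
      simpa using this
    rw [hC]
    simp only [Fintype.sum_prod_type]
    refine Finset.sum_comm.trans ?_
    refine Finset.sum_congr rfl fun a _ => ?_
    refine (Finset.sum_congr rfl fun i _ => Finset.sum_comm).trans ?_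
    refine Finset.sum_comm.trans ?_
    refine Finset.sum_congr rfl fun b _ => ?_
    simp only [Fin.sum_univ_succ, Matrix.of_apply, hu, Fin.cons_zero, Fin.cons_succ,
      Fin.succ_ne_zero, if_true, if_false, ite_false, ite_true, reduceIte,
      Fin.succ_inj, Matrix.add_apply, Matrix.sub_apply, Matrix.smul_apply,
      Matrix.conjTranspose_apply, smul_eq_mul, Matrix.zero_apply,
      ContinuousLinearMap.adjoint_inner_left]
    simp only [apply_ite (fun M : Matrix (Fin p) (Fin p) ℂ => M a b), ite_mul, zero_mul,
      Matrix.zero_apply, Matrix.sub_apply, Finset.sum_ite_eq, Finset.mem_univ, if_true,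
      starRingEnd_apply, Finset.sum_add_distrib]
    rw [← Finset.mul_sum, hsum']
    ring
  have hCT : C = 2 * ∑ a, ∑ b, (inner ℂ (v a)
        ((A0 a b • (1 : H →L[ℂ] H)
            + ∑ i, A i a b • S i
            + ∑ i, (starRingEnd ℂ) (A i b a) • ContinuousLinearMap.adjoint (S i)) (v b)) : ℂ) := by
    rw [Finset.mul_sum]
    refine Finset.sum_congr rfl fun a _ => ?_
    rw [Finset.mul_sum]
    refine Finset.sum_congr rfl fun b _ => ?_
    simp only [ContinuousLinearMap.add_apply, ContinuousLinearMap.smul_apply,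
      ContinuousLinearMap.one_apply, ContinuousLinearMap.sum_apply, inner_add_right,
      inner_sum, inner_smul_right, mul_add, Finset.mul_sum]
    rw [show (∑ i : Fin n, 2 * (A i a b * (inner ℂ (v a) ((S i) (v b)) : ℂ)))
        = ∑ i : Fin n, A i a b * (inner ℂ (v a) ((S i) (v b)) : ℂ) * 2 from
        Finset.sum_congr rfl fun i _ => by ring,
      show (∑ i : Fin n, 2 * ((starRingEnd ℂ) (A i b a) * (inner ℂ (v a) ((ContinuousLinearMap.adjoint (S i)) (v b)) : ℂ)))
        = ∑ i : Fin n, (starRingEnd ℂ) (A i b a) * (inner ℂ (v a) ((ContinuousLinearMap.adjoint (S i)) (v b)) : ℂ) * 2 from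
        Finset.sum_congr rfl fun i _ => by ring]
    ring
  rw [hQC, hCT] at hQ
  have hT : (∑ a, ∑ b,
        (inner ℂ
          ((A0 a b • (1 : H →L[ℂ] H)
            + ∑ i, A i a b • S i
            + ∑ i, (starRingEnd ℂ) (A i b a) • ContinuousLinearMap.adjoint (S i))
          (v b)) (v a) : ℂ))
      = (starRingEnd ℂ) (∑ a, ∑ b, (inner ℂ (v a)
        ((A0 a b • (1 : H →L[ℂ] H)
            + ∑ i, A i a b • S i
            + ∑ i, (starRingEnd ℂ) (A i b a) • ContinuousLinearMap.adjoint (S i)) (v b)) : ℂ)) := by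
    rw [map_sum]
    refine Finset.sum_congr rfl fun a _ => ?_
    rw [map_sum]
    exact Finset.sum_congr rfl fun b _ => (inner_conj_symm _ _).symm
  rw [hT]
  generalize hz : (∑ a, ∑ b, (inner ℂ (v a)
        ((A0 a b • (1 : H →L[ℂ] H)
            + ∑ i, A i a b • S i
            + ∑ i, (starRingEnd ℂ) (A i b a) • ContinuousLinearMap.adjoint (S i)) (v b)) : ℂ)) = z at hQ ⊢
  rw [Complex.nonneg_iff] at hQ ⊢
  obtain ⟨h1, h2⟩ := hQ
  norm_num [Complex.mul_re, Complex.mul_im] at h1 h2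
  constructor
  · simp only [Complex.conj_re]; linarith
  · simp only [Complex.conj_im]; linarith
end

section
/- Let J be a finite-dimensional self-adjoint subspace of an operator system S containing no positive elements other than 0, and suppose J is a kernel (J = ker φ for some unital completely positive φ). Then J is completely order proximinal: for every n and every (xᵢⱼ + J) in the quotient cone C_n of M_n(S/J), there exist kᵢⱼ ∈ J with (xᵢⱼ + kᵢⱼ) ∈ M_n(S)⁺. -/
open scoped Matrix

set_option linter.unusedSectionVars false
set_option maxHeartbeats 1000000
set_option synthInstance.maxHeartbeats 1000000

namespace OSProx

def IsPos {A : Type*} [Mul A] [Star A] (a : A) : Prop := ∃ y, a = star y * y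

/-- Type synonym for the matrix algebra, used to carry a bespoke C⋆-norm without
clashing with global instances on `Matrix`. -/
def MatAlg (A : Type*) (m : ℕ) : Type _ := Matrix (Fin m) (Fin m) A

namespace MatAlg
variable {A : Type*} {m : ℕ}

noncomputable instance [Ring A] : Ring (MatAlg A m) :=
  inferInstanceAs (Ring (Matrix (Fin m) (Fin m) A))
instance [Ring A] [StarRing A] : StarRing (MatAlg A m) :=
  inferInstanceAs (StarRing (Matrix (Fin m) (Fin m) A))
noncomputable instance [Ring A] [Algebra ℂ A] : Algebra ℂ (MatAlg A m) :=
  inferInstanceAs (Algebra ℂ (Matrix (Fin m) (Fin m) A))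
instance [Ring A] [StarRing A] [Algebra ℂ A] [StarModule ℂ A] : StarModule ℂ (MatAlg A m) :=
  inferInstanceAs (StarModule ℂ (Matrix (Fin m) (Fin m) A))

/-- Identity map from matrices. -/
def ofM (x : Matrix (Fin m) (Fin m) A) : MatAlg A m := x
/-- Identity map to matrices. -/
def toM (x : MatAlg A m) : Matrix (Fin m) (Fin m) A := x

section lemmas
variable [Ring A] [StarRing A]
@[simp] theorem toM_ofM (x : Matrix (Fin m) (Fin m) A) : toM (ofM x) = x := rfl
@[simp] theorem toM_one : toM (1 : MatAlg A m) = 1 := rfl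
@[simp] theorem toM_zero : toM (0 : MatAlg A m) = 0 := rfl
@[simp] theorem toM_add (a b : MatAlg A m) : toM (a + b) = toM a + toM b := rfl
@[simp] theorem toM_sub (a b : MatAlg A m) : toM (a - b) = toM a - toM b := rfl
@[simp] theorem toM_mul (a b : MatAlg A m) : toM (a * b) = toM a * toM b := rfl
@[simp] theorem toM_star (a : MatAlg A m) : toM (star a) = (toM a)ᴴ := rfl
theorem ext' {a b : MatAlg A m} (h : toM a = toM b) : a = b := h
end lemmas
end MatAlg

section Alevel
variable {A : Type*} [NormedRing A] [StarRing A] [CStarRing A]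
    [NormedAlgebra ℂ A] [StarModule ℂ A] [CompleteSpace A]

@[reducible]
noncomputable def cstarAlg (A : Type*) [NormedRing A] [StarRing A] [CStarRing A]
    [NormedAlgebra ℂ A] [StarModule ℂ A] [CompleteSpace A] : CStarAlgebra A :=
  { ‹NormedRing A›, ‹StarRing A›, ‹CStarRing A›, ‹NormedAlgebra ℂ A›, ‹StarModule ℂ A›,
    ‹CompleteSpace A› with }

theorem pos_iff_nonneg {B : Type*} [CStarAlgebra B] [PartialOrder B] [StarOrderedRing B]
    (a : B) : IsPos a ↔ 0 ≤ a := by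
  constructor
  · rintro ⟨y, rfl⟩; exact star_mul_self_nonneg y
  · intro h
    refine ⟨CFC.sqrt a, ?_⟩
    rw [(IsSelfAdjoint.of_nonneg (CFC.sqrt_nonneg a)).star_eq, CFC.sqrt_mul_sqrt_self a h]

theorem isPos_lim {B : Type*} [CStarAlgebra B] [PartialOrder B] [StarOrderedRing B]
    {u : ℕ → B} {a : B} (hu : ∀ n, IsPos (u n))
    (h : Filter.Tendsto u Filter.atTop (nhds a)) : IsPos a := by
  rw [pos_iff_nonneg]
  have : IsClosed {b : B | 0 ≤ b} := CStarAlgebra.isClosed_nonneg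
  exact this.mem_of_tendsto h (Filter.Eventually.of_forall fun n => (pos_iff_nonneg _).1 (hu n))

/-- The two key facts about positivity in matrix algebras over a C⋆-algebra:
the set of positive matrices is closed under addition and under entrywise limits. -/
theorem matrix_facts (m : ℕ) :
    (∀ a b : Matrix (Fin m) (Fin m) A, IsPos a → IsPos b → IsPos (a + b)) ∧
    (∀ (u : ℕ → Matrix (Fin m) (Fin m) A) (a : Matrix (Fin m) (Fin m) A),
      (∀ n, IsPos (u n)) →
      (∀ i j, Filter.Tendsto (fun n => u n i j) Filter.atTop (nhds (a i j))) →
      IsPos a) := by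
  rcases subsingleton_or_nontrivial A with hA | hA
  · haveI : Subsingleton (Matrix (Fin m) (Fin m) A) :=
      ⟨fun a b => by ext i j; exact Subsingleton.elim _ _⟩
    exact ⟨fun a b _ _ => ⟨0, Subsingleton.elim _ _⟩,
      fun u a _ _ => ⟨0, Subsingleton.elim _ _⟩⟩
  letI := cstarAlg A
  letI : PartialOrder A := CStarAlgebra.spectralOrder A
  haveI : StarOrderedRing A := CStarAlgebra.spectralOrderedRing A
  letI : PartialOrder (CStarMatrix (Fin m) (Fin m) A) := CStarAlgebra.spectralOrder _
  haveI : StarOrderedRing (CStarMatrix (Fin m) (Fin m) A) := CStarAlgebra.spectralOrderedRing _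
  constructor
  · intro a b ha hb
    have ha' : IsPos (CStarMatrix.ofMatrix a) := ha
    have hb' : IsPos (CStarMatrix.ofMatrix b) := hb
    rw [pos_iff_nonneg] at ha' hb'
    exact (pos_iff_nonneg _).2 (add_nonneg ha' hb')
  · intro u a hu hconv
    have hu' : ∀ n, IsPos (CStarMatrix.ofMatrix (u n)) := hu
    have hc : Filter.Tendsto (fun n => CStarMatrix.ofMatrix (u n)) Filter.atTop
        (nhds (CStarMatrix.ofMatrix a)) :=
      tendsto_pi_nhds.2 fun i => tendsto_pi_nhds.2 fun j => hconv i j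
    exact isPos_lim hu' hc

theorem isPos_real_smul_mat {m : ℕ} {a : Matrix (Fin m) (Fin m) A} {r : ℝ} (hr : 0 ≤ r)
    (ha : IsPos a) : IsPos ((r:ℂ) • a) := by
  obtain ⟨y, rfl⟩ := ha
  refine ⟨(Real.sqrt r : ℂ) • y, ?_⟩
  rw [star_smul, smul_mul_smul_comm, Complex.star_def]
  congr 1
  rw [Complex.conj_ofReal, ← Complex.ofReal_mul, Real.mul_self_sqrt hr]

theorem isPos_smul_one {m : ℕ} {δ : ℝ} (hδ : 0 ≤ δ) :
    IsPos ((δ:ℂ) • (1 : Matrix (Fin m) (Fin m) A)) := by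
  have := isPos_real_smul_mat (A := A) (m := m) (a := 1) hδ ⟨1, by simp⟩
  simpa using this

theorem isPos_sum_eq_zero {ι : Type*} (s : Finset ι) (f : ι → A)
    (h : ∑ i ∈ s, star (f i) * f i = 0) : ∀ i ∈ s, f i = 0 := by
  letI := cstarAlg A
  letI : PartialOrder A := CStarAlgebra.spectralOrder A
  haveI : StarOrderedRing A := CStarAlgebra.spectralOrderedRing A
  intro i hi
  have h0 : ∀ j ∈ s, (0:A) ≤ star (f j) * f j := fun j _ => star_mul_self_nonneg _
  have h1 := (Finset.sum_eq_zero_iff_of_nonneg h0).1 h i hi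
  exact (CStarRing.star_mul_self_eq_zero_iff (f i)).1 h1

theorem sum_star_mul_self_rep {ι : Type*} (s : Finset ι) (f : ι → A) :
    ∃ w : A, ∑ i ∈ s, star (f i) * f i = star w * w := by
  letI := cstarAlg A
  letI : PartialOrder A := CStarAlgebra.spectralOrder A
  haveI : StarOrderedRing A := CStarAlgebra.spectralOrderedRing A
  have h : (0:A) ≤ ∑ i ∈ s, star (f i) * f i :=
    Finset.sum_nonneg fun i _ => star_mul_self_nonneg _
  exact (pos_iff_nonneg _).2 h

end Alevel
end OSProx

open OSProx

/-- Let `S` be a (concrete) operator system in a unital C*-algebra `A`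
and let `J ⊆ S` be a finite-dimensional self-adjoint subspace containing no positive
elements other than `0` which is a kernel: `J = ker φ` for a unital completely positive
map `φ : S → B` into a C*-algebra `B`. Then `J` is completely order proximinal: whenever
`(xᵢⱼ + J)` lies in the quotient cone `C_m` (for every `ε > 0` there are `kᵢⱼ ∈ J` with
`ε·1 ⊗ I_m + (xᵢⱼ + kᵢⱼ) ≥ 0` in `M_m(A)`), there exist `kᵢⱼ ∈ J` with
`(xᵢⱼ + kᵢⱼ) ≥ 0` in `M_m(A)`. Positivity in matrix algebras over a C*-algebra is
expressed by the characterization `x = Yᴴ * Y`. -/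
theorem finite_dimensional_kernel_completely_order_proximinal
    {A : Type*} [NormedRing A] [StarRing A] [CStarRing A]
    [NormedAlgebra ℂ A] [StarModule ℂ A] [CompleteSpace A]
    {B : Type*} [NormedRing B] [StarRing B] [CStarRing B]
    [NormedAlgebra ℂ B] [StarModule ℂ B] [CompleteSpace B]
    (S J : Submodule ℂ A)
    (hS1 : (1 : A) ∈ S) (hSstar : ∀ x ∈ S, star x ∈ S)
    (hJS : J ≤ S) (hJstar : ∀ x ∈ J, star x ∈ J)
    (hJfin : FiniteDimensional ℂ J)
    (hJpos : ∀ x ∈ J, (∃ y : A, x = star y * y) → x = 0)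
    (φ : S →ₗ[ℂ] B)
    (hφ1 : φ ⟨1, hS1⟩ = 1)
    (hφcp : ∀ (m : ℕ) (x : Matrix (Fin m) (Fin m) A) (hx : ∀ i j, x i j ∈ S),
      (∃ Y : Matrix (Fin m) (Fin m) A, x = Yᴴ * Y) →
      ∃ Z : Matrix (Fin m) (Fin m) B,
        (Matrix.of fun i j => φ ⟨x i j, hx i j⟩) = Zᴴ * Z)
    (hker : ∀ (x : A) (hx : x ∈ S), φ ⟨x, hx⟩ = 0 ↔ x ∈ J) :
    ∀ (m : ℕ) (x : Matrix (Fin m) (Fin m) A), (∀ i j, x i j ∈ S) →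
      (∀ ε : ℝ, 0 < ε → ∃ k : Matrix (Fin m) (Fin m) A,
        (∀ i j, k i j ∈ J) ∧
        ∃ Y : Matrix (Fin m) (Fin m) A, (ε : ℂ) • (1 : Matrix (Fin m) (Fin m) A) + (x + k) = Yᴴ * Y) →
      ∃ k : Matrix (Fin m) (Fin m) A,
        (∀ i j, k i j ∈ J) ∧ ∃ Y : Matrix (Fin m) (Fin m) A, x + k = Yᴴ * Y := by
  intro m x hxS hx
  rcases subsingleton_or_nontrivial A with hA | hA
  · haveI : Subsingleton (Matrix (Fin m) (Fin m) A) :=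
      ⟨fun a b => by ext i j; exact Subsingleton.elim _ _⟩
    exact ⟨0, fun i j => J.zero_mem, 0, Subsingleton.elim _ _⟩
  obtain ⟨Kadd, Klim⟩ := OSProx.matrix_facts (A := A) m
  have hc0 : Filter.Tendsto (fun n : ℕ => ((1/(n+1) : ℝ) : ℂ)) Filter.atTop (nhds 0) := by
    have h1 := tendsto_one_div_add_atTop_nhds_zero_nat (𝕜 := ℝ)
    have h2 := (Complex.continuous_ofReal.tendsto 0).comp h1
    simpa [Function.comp_def] using h2
  have K1 : ∀ a : Matrix (Fin m) (Fin m) A,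
      (∀ n : ℕ, IsPos (((1/(n+1) : ℝ) : ℂ) • 1 + a)) → IsPos a := by
    intro a h
    refine Klim _ a h ?_
    intro i j
    have h2 := (hc0.smul_const ((1 : Matrix (Fin m) (Fin m) A) i j)).add_const (a i j)
    simpa [Matrix.add_apply, Matrix.smul_apply] using h2
  -- the finite-dimensional subspace of matrices with entries in J
  let T : (Fin m → Fin m → J) →ₗ[ℂ] (Fin m → Fin m → A) :=
    { toFun := fun f i j => (f i j : A)
      map_add' := fun f g => rfl
      map_smul' := fun c f => rfl }
  let F : Submodule ℂ (Fin m → Fin m → A) := LinearMap.range T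
  haveI : FiniteDimensional ℂ F := inferInstance
  have hFentries : ∀ w : F, ∀ i j, (w : Fin m → Fin m → A) i j ∈ J := by
    rintro ⟨w, hw⟩ i j
    obtain ⟨f, rfl⟩ := hw
    exact (f i j).2
  -- the sets D n
  let εn : ℕ → ℝ := fun n => 1/(n+1)
  have hεn : ∀ n, 0 < εn n := fun n => by positivity
  let D : ℕ → Set F := fun n =>
    {g : F | IsPos ((εn n : ℂ) • 1 + (x + Matrix.of (g : Fin m → Fin m → A)))}
  -- entries of elements of F depend continuously
  have hcont : ∀ i j : Fin m, Continuous fun g : F => (g : Fin m → Fin m → A) i j :=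
    fun i j => (continuous_apply j).comp ((continuous_apply i).comp continuous_subtype_val)
  have hDclosed : ∀ n, IsClosed (D n) := by
    intro n
    refine IsSeqClosed.isClosed ?_
    intro f g hf hfg
    refine Klim (fun p => (εn n : ℂ) • 1 + (x + Matrix.of ((f p : F) : Fin m → Fin m → A)))
      _ hf ?_
    intro i j
    have h1 : Filter.Tendsto (fun p => ((f p : F) : Fin m → Fin m → A) i j)
        Filter.atTop (nhds ((g : Fin m → Fin m → A) i j)) :=
      ((hcont i j).tendsto g).comp hfg
    have h2 := (h1.const_add (x i j)).const_add (((εn n : ℂ) • (1 : Matrix (Fin m) (Fin m) A)) i j)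
    simpa [Matrix.add_apply] using h2
  -- D is antitone
  have hDanti : ∀ p q : ℕ, p ≤ q → D q ⊆ D p := by
    intro p q hpq g hg
    have hle : εn q ≤ εn p := by
      apply one_div_le_one_div_of_le
      · positivity
      · exact_mod_cast by exact_mod_cast add_le_add_left (Nat.cast_le.mpr hpq) 1
    have h1 : IsPos (((εn p - εn q : ℝ) : ℂ) • (1 : Matrix (Fin m) (Fin m) A)) :=
      isPos_smul_one (by linarith)
    have h2 := Kadd _ _ h1 hg
    have h3 : ((εn p - εn q : ℝ) : ℂ) • (1 : Matrix (Fin m) (Fin m) A) +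
        ((εn q : ℂ) • 1 + (x + Matrix.of (g : Fin m → Fin m → A)))
        = (εn p : ℂ) • 1 + (x + Matrix.of (g : Fin m → Fin m → A)) := by
      rw [← add_assoc, ← add_smul, Complex.ofReal_sub, sub_add_cancel]
    rwa [h3] at h2
  -- D n is nonempty
  have hDne : ∀ n, (D n).Nonempty := by
    intro n
    obtain ⟨k, hkJ, Y, hY⟩ := hx (εn n) (hεn n)
    refine ⟨⟨fun i j => k i j, ⟨fun i j => ⟨k i j, hkJ i j⟩, rfl⟩⟩, ?_⟩
    show IsPos ((εn n : ℂ) • 1 + (x + Matrix.of fun i j => k i j))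
    exact ⟨Y, by rw [Matrix.star_eq_conjTranspose]; exact hY⟩
  -- D 0 is bounded
  have hDbdd : Bornology.IsBounded (D 0) := by
    by_contra hub
    rw [isBounded_iff_forall_norm_le] at hub
    push_neg at hub
    have hseq : ∀ n : ℕ, ∃ g ∈ D 0, (n : ℝ) + 1 < ‖g‖ := by
      intro n
      obtain ⟨g, hgD, hgn⟩ := hub ((n : ℝ) + 1)
      exact ⟨g, hgD, hgn⟩
    choose gs hgsD hgsn using hseq
    have hgs_pos : ∀ n, 0 < ‖gs n‖ := fun n => lt_of_le_of_lt (by positivity) (hgsn n)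
    let ys : ℕ → F := fun n => ((‖gs n‖⁻¹ : ℝ) : ℂ) • gs n
    have hys_norm : ∀ n, ‖ys n‖ = 1 := by
      intro n
      show ‖((‖gs n‖⁻¹ : ℝ) : ℂ) • gs n‖ = 1
      rw [norm_smul (((‖gs n‖⁻¹ : ℝ) : ℂ)) (gs n)]
      simp [abs_of_pos (inv_pos.mpr (hgs_pos n))]
      exact inv_mul_cancel₀ (ne_of_gt (hgs_pos n))
    have hys_mem : ∀ n, ys n ∈ Metric.sphere (0 : F) 1 := by
      intro n
      simpa [Metric.mem_sphere, dist_eq_norm] using hys_norm n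
    obtain ⟨y, hy_mem, ψ, hψ, hyconv⟩ :=
      (isCompact_sphere (0 : F) 1).tendsto_subseq hys_mem
    -- the matrix of y is positive
    have hyPos : IsPos (Matrix.of (y : Fin m → Fin m → A)) := by
      refine Klim (fun n => ((‖gs (ψ n)‖⁻¹ : ℝ) : ℂ) •
        ((εn 0 : ℂ) • 1 + (x + Matrix.of (gs (ψ n) : Fin m → Fin m → A)))) _
        (fun n => isPos_real_smul_mat (by positivity) (hgsD (ψ n))) ?_
      intro i j
      -- entrywise limit
      have hinv0 : Filter.Tendsto (fun n => (‖gs (ψ n)‖⁻¹ : ℝ)) Filter.atTop (nhds 0) := by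
        have hb : ∀ n : ℕ, ‖gs (ψ n)‖⁻¹ ≤ 1/(n+1) := by
          intro n
          rw [one_div]
          apply inv_anti₀ (by positivity)
          calc (n : ℝ) + 1 ≤ (ψ n : ℝ) + 1 := by
                have hle : n ≤ ψ n := hψ.le_apply
                have := add_le_add_left (Nat.cast_le.mpr hle : (n:ℝ) ≤ (ψ n : ℝ)) (1:ℝ)
                exact this
            _ ≤ ‖gs (ψ n)‖ := le_of_lt (hgsn (ψ n))
        have h0le : ∀ n : ℕ, (0:ℝ) ≤ ‖gs (ψ n)‖⁻¹ := fun n => by positivity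
        exact squeeze_zero h0le hb tendsto_one_div_add_atTop_nhds_zero_nat
      have hinv0c : Filter.Tendsto (fun n => ((‖gs (ψ n)‖⁻¹ : ℝ) : ℂ)) Filter.atTop (nhds 0) := by
        have := (Complex.continuous_ofReal.tendsto 0).comp hinv0
        simpa [Function.comp_def] using this
      -- entry of scaled matrix
      have hyentry : Filter.Tendsto (fun n => ((ys (ψ n) : F) : Fin m → Fin m → A) i j)
          Filter.atTop (nhds ((y : Fin m → Fin m → A) i j)) :=
        ((hcont i j).tendsto y).comp hyconv
      have hconst : Filter.Tendsto
          (fun n => ((‖gs (ψ n)‖⁻¹ : ℝ) : ℂ) • (((εn 0 : ℂ) • (1 : Matrix (Fin m) (Fin m) A))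
            i j + x i j)) Filter.atTop (nhds 0) := by
        have := hinv0c.smul_const (((εn 0 : ℂ) • (1 : Matrix (Fin m) (Fin m) A)) i j + x i j)
        simpa using this
      have hsum := hconst.add hyentry
      rw [zero_add] at hsum
      refine hsum.congr fun n => ?_
      show ((‖gs (ψ n)‖⁻¹ : ℝ) : ℂ) • (((εn 0 : ℂ) • (1 : Matrix (Fin m) (Fin m) A)) i j
          + x i j) + ((ys (ψ n) : F) : Fin m → Fin m → A) i j = _
      have hysentry : ((ys (ψ n) : F) : Fin m → Fin m → A) i j
          = ((‖gs (ψ n)‖⁻¹ : ℝ) : ℂ) • ((gs (ψ n) : F) : Fin m → Fin m → A) i j := rfl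
      rw [hysentry]
      rw [← smul_add]
      congr 1
      simp [Matrix.add_apply, add_assoc]
    -- y has entries in J, is positive, hence zero
    obtain ⟨Z, hZ⟩ := hyPos
    have hZcol : ∀ p i : Fin m, Z p i = 0 := by
      intro p i
      have hdiag : (y : Fin m → Fin m → A) i i = ∑ q, star (Z q i) * Z q i := by
        have := congrArg (fun M => M i i) hZ
        simpa [Matrix.mul_apply, Matrix.star_eq_conjTranspose, Matrix.conjTranspose_apply]
          using this
      have h0 : (y : Fin m → Fin m → A) i i = 0 := by
        obtain ⟨w, hw⟩ := OSProx.sum_star_mul_self_rep (A := A) Finset.univ (fun q => Z q i)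
        exact hJpos _ (hFentries y i i) ⟨w, by rw [hdiag, hw]⟩
      have hsum0 : ∑ q, star (Z q i) * Z q i = 0 := by rw [← hdiag, h0]
      exact OSProx.isPos_sum_eq_zero Finset.univ _ hsum0 p (Finset.mem_univ p)
    have hy0 : y = (0 : F) := by
      have : (y : Fin m → Fin m → A) = 0 := by
        funext i j
        have := congrArg (fun M => M i j) hZ
        simp only [Matrix.mul_apply, Matrix.star_eq_conjTranspose,
          Matrix.conjTranspose_apply] at this
        simp only [Matrix.of_apply] at this
        rw [this]
        simp [hZcol]
      exact Subtype.ext this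
    have : (1:ℝ) = 0 := by
      have h1 : ‖y‖ = 1 := by simpa [Metric.mem_sphere, dist_eq_norm] using hy_mem
      rw [hy0] at h1
      simpa using h1.symm
    norm_num at this
  -- compact intersection
  have hDcompact : ∀ n, IsCompact (D n) :=
    fun n => Metric.isCompact_of_isClosed_isBounded (hDclosed n)
      (hDbdd.subset (hDanti 0 n (Nat.zero_le n)))
  have hDdir : Directed (· ⊇ ·) D := fun p q =>
    ⟨max p q, hDanti p (max p q) (le_max_left p q), hDanti q (max p q) (le_max_right p q)⟩
  obtain ⟨g, hg⟩ := IsCompact.nonempty_iInter_of_directed_nonempty_isCompact_isClosed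
    D hDdir hDne hDcompact hDclosed
  rw [Set.mem_iInter] at hg
  -- conclusion
  have hfinal : IsPos (x + Matrix.of (g : Fin m → Fin m → A)) := by
    refine K1 _ fun n => ?_
    exact hg n
  obtain ⟨Y, hY⟩ := hfinal
  exact ⟨Matrix.of (g : Fin m → Fin m → A), fun i j => hFentries g i j,
    Y, by rw [← Matrix.star_eq_conjTranspose]; exact hY⟩
end
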